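/- Let m, p, ℓ be positive integers and let t be an edge labeling of K_n (n ≥ 2) of (m,ℓ)_p type. Then for any two distinct vertices u, v and any p-swap t′ of t, |s(t′,u) − s(t′,v)| ≤ |s(t,u) − s(t,v)| + 2mp² + 2p(n − ℓ − 1). -/
import Mathlib


open Finset

namespace Swap

noncomputable section
open scoped Classical

def eps (n : ℕ) : ℕ := n * (n - 1) / 2

def incEdges (n : ℕ) (v : Fin n) : Finset (Sym2 (Fin n)) :=
  Finset.univ.filter fun e => v ∈ e ∧ ¬ e.IsDiag

def IsEdgeLabeling (n : ℕ) (t : Sym2 (Fin n) → ℕ) : Prop :=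
  Set.BijOn t {e : Sym2 (Fin n) | ¬ e.IsDiag} (Set.Icc 1 (eps n))

def labelSum (n : ℕ) (t : Sym2 (Fin n) → ℕ) (v : Fin n) : ℤ :=
  ∑ e ∈ incEdges n v, (t e : ℤ)

def labelSet (n : ℕ) (t : Sym2 (Fin n) → ℕ) (v : Fin n) : Finset ℕ :=
  (incEdges n v).image t

def AlmostSupermagic (n α : ℕ) (t : Sym2 (Fin n) → ℕ) : Prop :=
  IsEdgeLabeling n t ∧ ∀ u v : Fin n, |labelSum n t u - labelSum n t v| ≤ (α : ℤ)

def IsPSwap (n p : ℕ) (t t' : Sym2 (Fin n) → ℕ) : Prop :=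
  IsEdgeLabeling n t' ∧ ∀ e : Sym2 (Fin n), ¬ e.IsDiag → |(t' e : ℤ) - (t e : ℤ)| ≤ (p : ℤ)

def robustness (n p : ℕ) (t : Sym2 (Fin n) → ℕ) : ℕ :=
  sSup {d : ℕ | ∃ t' : Sym2 (Fin n) → ℕ, IsPSwap n p t t' ∧
    ∃ u v : Fin n, u ≠ v ∧ (d : ℤ) = |labelSum n t' u - labelSum n t' v|}

def Uplus (n p : ℕ) (t : Sym2 (Fin n) → ℕ) (v : Fin n) : Finset (Sym2 (Fin n)) :=
  (incEdges n v).filter fun e => ∃ e' ∈ incEdges n v, t e' = t e + p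

def Uminus (n p : ℕ) (t : Sym2 (Fin n) → ℕ) (v : Fin n) : Finset (Sym2 (Fin n)) :=
  (incEdges n v).filter fun e => ∃ e' ∈ incEdges n v, t e' + p = t e

def badPairsI (n p : ℕ) (t : Sym2 (Fin n) → ℕ) (u v : Fin n) :
    Finset (Sym2 (Sym2 (Fin n))) :=
  Finset.univ.filter fun P => ∃ e₁ e₂ : Sym2 (Fin n), P = s(e₁, e₂) ∧
    ¬ e₁.IsDiag ∧ ¬ e₂.IsDiag ∧ u ∈ e₁ ∧ v ∈ e₂ ∧ ((t e₁ : ℤ) - (t e₂ : ℤ)).natAbs = p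

def badPairsII (n p : ℕ) (t : Sym2 (Fin n) → ℕ) (u v : Fin n) :
    Finset (Sym2 (Sym2 (Fin n))) :=
  Finset.univ.filter fun P => ∃ e₁ e₂ : Sym2 (Fin n), P = s(e₁, e₂) ∧
    ¬ e₁.IsDiag ∧ ¬ e₂.IsDiag ∧ u ∈ e₁ ∧ v ∈ e₂ ∧ ((t e₁ : ℤ) - (t e₂ : ℤ)).natAbs = 2 * p

def badPairs (n p : ℕ) (t : Sym2 (Fin n) → ℕ) (u v : Fin n) :
    Finset (Sym2 (Sym2 (Fin n))) :=
  badPairsI n p t u v ∪ badPairsII n p t u v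

def IsAP1 (I : Finset ℕ) : Prop := ∃ a b : ℕ, a ≤ b ∧ I = Finset.Icc a b

def SetHasType (p m ℓ : ℕ) (S : Finset ℕ) : Prop :=
  ∃ 𝒜 : Finset (Finset ℕ), 𝒜.card ≤ m ∧
    (∀ I ∈ 𝒜, IsAP1 I ∧ I ⊆ S ∧ 2 * p ≤ I.card) ∧
    (𝒜 : Set (Finset ℕ)).PairwiseDisjoint id ∧
    ℓ ≤ ∑ I ∈ 𝒜, I.card

def LabelingHasType (n p m ℓ : ℕ) (t : Sym2 (Fin n) → ℕ) : Prop :=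
  ∀ v : Fin n, SetHasType p m ℓ (labelSet n t v)

def AstrayGood (n b : ℕ) (t : Sym2 (Fin n) → ℕ) : Prop :=
  IsEdgeLabeling n t ∧
  ∃ A : Finset (Sym2 (Fin n)), (∀ e ∈ A, ¬ e.IsDiag) ∧
    A.card % 2 = eps n % 2 ∧
    A.image t = Finset.Icc ((eps n - A.card) / 2 + 1) ((eps n + A.card) / 2) ∧
    ∀ v : Fin n,
      (incEdges n v ∩ A).card ≤ b ∧
      ((incEdges n v).filter fun e => t e ≤ (eps n - A.card) / 2).card
        = ((incEdges n v).filter fun e => (eps n + A.card) / 2 < t e).card ∧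
      2 * ∑ e ∈ incEdges n v \ A, t e = (incEdges n v \ A).card * (eps n + 1)

def Admissible (p : ℕ → ℕ) : Prop :=
  Filter.Tendsto (fun n => (p n : ℝ) / n) Filter.atTop (nhds 0) ∧
  Filter.Tendsto p Filter.atTop Filter.atTop

end
end Swap

section Aux

open Finset

lemma aux_sum_le : ∀ (c : ℕ) (T : Finset ℕ) (M : ℤ), T.card = c →
    (∀ x ∈ T, (x : ℤ) ≤ M) → ∑ x ∈ T, (x : ℤ) ≤ ∑ i ∈ Finset.range c, (M - (i : ℤ)) := by
  intro c
  induction c with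
  | zero => intro T M hc _; rw [Finset.card_eq_zero.mp hc]; simp
  | succ c ih =>
    intro T M hc h
    have hne : T.Nonempty := Finset.card_pos.mp (by omega)
    have hxT : T.max' hne ∈ T := T.max'_mem hne
    have hkey := ih (T.erase (T.max' hne)) (M - 1)
      (by rw [Finset.card_erase_of_mem hxT, hc]; omega)
      (by intro y hy
          have h1 := Finset.mem_of_mem_erase hy
          have h2 : y ≠ T.max' hne := Finset.ne_of_mem_erase hy
          have h3 : y ≤ T.max' hne := T.le_max' y h1
          have h4 := h _ hxT
          omega)
    have hsplit : ∑ x ∈ T, (x : ℤ) = (T.max' hne : ℤ) + ∑ x ∈ T.erase (T.max' hne), (x : ℤ) :=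
      (Finset.add_sum_erase T _ hxT).symm
    have hcongr : ∀ i ∈ Finset.range c, M - ((i : ℤ) + 1) = M - 1 - (i : ℤ) := by
      intro i _; ring
    have hR : ∑ i ∈ Finset.range (c + 1), (M - (i : ℤ)) =
        M + ∑ i ∈ Finset.range c, (M - 1 - (i : ℤ)) := by
      rw [Finset.sum_range_succ' (fun i => M - (i : ℤ)) c]
      push_cast
      rw [Finset.sum_congr rfl hcongr]
      ring
    rw [hsplit, hR]
    have := h _ hxT
    linarith

lemma aux_le_sum : ∀ (c : ℕ) (T : Finset ℕ) (m : ℤ), T.card = c →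
    (∀ x ∈ T, m ≤ (x : ℤ)) → ∑ i ∈ Finset.range c, (m + (i : ℤ)) ≤ ∑ x ∈ T, (x : ℤ) := by
  intro c
  induction c with
  | zero => intro T m hc _; rw [Finset.card_eq_zero.mp hc]; simp
  | succ c ih =>
    intro T m hc h
    have hne : T.Nonempty := Finset.card_pos.mp (by omega)
    have hxT : T.min' hne ∈ T := T.min'_mem hne
    have hkey := ih (T.erase (T.min' hne)) (m + 1)
      (by rw [Finset.card_erase_of_mem hxT, hc]; omega)
      (by intro y hy
          have h1 := Finset.mem_of_mem_erase hy
          have h2 : y ≠ T.min' hne := Finset.ne_of_mem_erase hy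
          have h3 : T.min' hne ≤ y := T.min'_le y h1
          have h4 := h _ hxT
          omega)
    have hsplit : ∑ x ∈ T, (x : ℤ) = (T.min' hne : ℤ) + ∑ x ∈ T.erase (T.min' hne), (x : ℤ) :=
      (Finset.add_sum_erase T _ hxT).symm
    have hcongr : ∀ i ∈ Finset.range c, m + ((i : ℤ) + 1) = m + 1 + (i : ℤ) := by
      intro i _; ring
    have hR : ∑ i ∈ Finset.range (c + 1), (m + (i : ℤ)) =
        m + ∑ i ∈ Finset.range c, (m + 1 + (i : ℤ)) := by
      rw [Finset.sum_range_succ' (fun i => m + (i : ℤ)) c]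
      push_cast
      rw [Finset.sum_congr rfl hcongr]
      ring
    rw [hsplit, hR]
    have := h _ hxT
    linarith

lemma aux_key {α : Type*} [DecidableEq α] (N p : ℕ) (t t' : α → ℕ) (E : Finset α)
    (htinj : Set.InjOn t ↑E) (htimg : E.image t = Finset.Icc 1 N)
    (ht'inj : Set.InjOn t' ↑E) (ht'img : E.image t' = Finset.Icc 1 N)
    (hd : ∀ e ∈ E, |(t' e : ℤ) - (t e : ℤ)| ≤ (p : ℤ))
    (k : ℕ) (hk : k ≤ N) :
    0 ≤ ∑ e ∈ E.filter (fun e => t e ≤ k), ((t' e : ℤ) - (t e : ℤ)) ∧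
      ∑ e ∈ E.filter (fun e => t e ≤ k), ((t' e : ℤ) - (t e : ℤ)) ≤ (p : ℤ) ^ 2 := by
  classical
  set A := E.filter (fun e => t e ≤ k) with hA
  have hAE : A ⊆ E := Finset.filter_subset _ _
  have htA : Set.InjOn t ↑A := htinj.mono (Finset.coe_subset.mpr hAE)
  have ht'A : Set.InjOn t' ↑A := ht'inj.mono (Finset.coe_subset.mpr hAE)
  have h1t : ∀ e ∈ E, 1 ≤ t e ∧ t e ≤ N := by
    intro e he
    have : t e ∈ E.image t := Finset.mem_image_of_mem t he
    rw [htimg, Finset.mem_Icc] at this; exact this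
  have h1t' : ∀ e ∈ E, 1 ≤ t' e ∧ t' e ≤ N := by
    intro e he
    have : t' e ∈ E.image t' := Finset.mem_image_of_mem t' he
    rw [ht'img, Finset.mem_Icc] at this; exact this
  have himgA : A.image t = Finset.Icc 1 k := by
    ext y
    simp only [Finset.mem_image, hA, Finset.mem_filter, Finset.mem_Icc]
    constructor
    · rintro ⟨e, ⟨he, hek⟩, rfl⟩; exact ⟨(h1t e he).1, hek⟩
    · rintro ⟨h1, h2⟩
      have : y ∈ E.image t := by rw [htimg, Finset.mem_Icc]; exact ⟨h1, le_trans h2 hk⟩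
      obtain ⟨e, he, rfl⟩ := Finset.mem_image.mp this
      exact ⟨e, ⟨he, h2⟩, rfl⟩
  have hcardA : A.card = k := by
    rw [← Finset.card_image_of_injOn htA, himgA, Nat.card_Icc]; omega
  set S := A.image t' with hS
  have hcardS : S.card = k := by rw [hS, Finset.card_image_of_injOn ht'A, hcardA]
  set q := min p k with hq
  set d := k - q with hd2
  have hdq : d + q = k := by omega
  have hcont : Finset.Icc 1 d ⊆ S := by
    intro y hy
    rw [Finset.mem_Icc] at hy
    have hyN : y ∈ E.image t' := by
      rw [ht'img, Finset.mem_Icc]; exact ⟨hy.1, by omega⟩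
    obtain ⟨e, he, rfl⟩ := Finset.mem_image.mp hyN
    have habs := hd e he
    rw [abs_le] at habs
    have htek : t e ≤ k := by
      have := habs.1
      omega
    exact Finset.mem_image_of_mem t' (Finset.mem_filter.mpr ⟨he, htek⟩)
  have hTsub : ∀ x ∈ S \ Finset.Icc 1 d, (d : ℤ) + 1 ≤ (x : ℤ) ∧ (x : ℤ) ≤ (k : ℤ) + p := by
    intro x hx
    obtain ⟨hxS, hxI⟩ := Finset.mem_sdiff.mp hx
    obtain ⟨e, heA, rfl⟩ := Finset.mem_image.mp hxS
    have heE : e ∈ E := hAE heA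
    have hte : t e ≤ k := (Finset.mem_filter.mp heA).2
    have habs := hd e heE
    rw [abs_le] at habs
    have h1 := (h1t' e heE).1
    rw [Finset.mem_Icc] at hxI
    constructor
    · have := habs.1; omega
    · have := habs.2; omega
  have hcardT : (S \ Finset.Icc 1 d).card = q := by
    rw [Finset.card_sdiff_of_subset hcont, hcardS, Nat.card_Icc]; omega
  have hsubKd : Finset.Icc 1 d ⊆ Finset.Icc 1 k := Finset.Icc_subset_Icc_right (by omega)
  have hcardT' : (Finset.Icc 1 k \ Finset.Icc 1 d).card = q := by
    rw [Finset.card_sdiff_of_subset hsubKd, Nat.card_Icc, Nat.card_Icc]; omega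
  have hT'sub : ∀ x ∈ Finset.Icc 1 k \ Finset.Icc 1 d, (d : ℤ) + 1 ≤ (x : ℤ) ∧ (x : ℤ) ≤ (k : ℤ) := by
    intro x hx
    obtain ⟨h1, h2⟩ := Finset.mem_sdiff.mp hx
    rw [Finset.mem_Icc] at h1
    rw [Finset.mem_Icc] at h2
    constructor <;> omega
  have hsum1 : ∑ e ∈ A, (t e : ℤ) = ∑ x ∈ Finset.Icc 1 k, (x : ℤ) := by
    rw [← himgA, Finset.sum_image (fun x hx y hy h => htA (Finset.mem_coe.mpr hx) (Finset.mem_coe.mpr hy) h)]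
  have hsum2 : ∑ e ∈ A, (t' e : ℤ) = ∑ x ∈ S, (x : ℤ) := by
    rw [hS, Finset.sum_image (fun x hx y hy h => ht'A (Finset.mem_coe.mpr hx) (Finset.mem_coe.mpr hy) h)]
  have hsplitS : ∑ x ∈ S \ Finset.Icc 1 d, (x : ℤ) + ∑ x ∈ Finset.Icc 1 d, (x : ℤ)
      = ∑ x ∈ S, (x : ℤ) := Finset.sum_sdiff hcont
  have hsplitK : ∑ x ∈ Finset.Icc 1 k \ Finset.Icc 1 d, (x : ℤ) + ∑ x ∈ Finset.Icc 1 d, (x : ℤ)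
      = ∑ x ∈ Finset.Icc 1 k, (x : ℤ) := Finset.sum_sdiff hsubKd
  have hTub := aux_sum_le q _ ((k : ℤ) + p) hcardT (fun x hx => (hTsub x hx).2)
  have hTlb := aux_le_sum q _ ((d : ℤ) + 1) hcardT (fun x hx => (hTsub x hx).1)
  have hT'ub := aux_sum_le q _ (k : ℤ) hcardT' (fun x hx => (hT'sub x hx).2)
  have hT'lb := aux_le_sum q _ ((d : ℤ) + 1) hcardT' (fun x hx => (hT'sub x hx).1)
  have hrefl : ∑ i ∈ Finset.range q, ((k : ℤ) - (i : ℤ))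
      = ∑ i ∈ Finset.range q, ((d : ℤ) + 1 + (i : ℤ)) := by
    rw [← Finset.sum_range_reflect (fun i => (d : ℤ) + 1 + (i : ℤ)) q]
    apply Finset.sum_congr rfl
    intro j hj
    have hjq := Finset.mem_range.mp hj
    omega
  have hP : ∑ e ∈ A, ((t' e : ℤ) - (t e : ℤ))
      = (∑ x ∈ S \ Finset.Icc 1 d, (x : ℤ)) - (∑ x ∈ Finset.Icc 1 k \ Finset.Icc 1 d, (x : ℤ)) := by
    rw [Finset.sum_sub_distrib, hsum2, hsum1, ← hsplitS, ← hsplitK]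
    ring
  have hdiff : ∑ i ∈ Finset.range q, ((k : ℤ) + p - (i : ℤ))
      - ∑ i ∈ Finset.range q, ((k : ℤ) - (i : ℤ)) = (q : ℤ) * p := by
    rw [← Finset.sum_sub_distrib]
    have hc : ∀ i ∈ Finset.range q, ((k : ℤ) + p - (i : ℤ)) - ((k : ℤ) - (i : ℤ)) = (p : ℤ) :=
      fun i _ => by ring
    rw [Finset.sum_congr rfl hc, Finset.sum_const, Finset.card_range, nsmul_eq_mul]
  have hqp : (q : ℤ) * p ≤ (p : ℤ) ^ 2 := by
    have h1 : (q : ℤ) ≤ p := by exact_mod_cast min_le_left p k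
    have h2 : (0 : ℤ) ≤ p := by positivity
    nlinarith
  constructor
  · rw [hP]; linarith
  · rw [hP]; linarith

end Aux

section VB

open Finset

lemma vertex_bound (n p m ℓ : ℕ) (hn : 2 ≤ n)
    (t t' : Sym2 (Fin n) → ℕ)
    (ht : Swap.IsEdgeLabeling n t) (ht' : Swap.IsEdgeLabeling n t')
    (hdisp : ∀ e : Sym2 (Fin n), ¬ e.IsDiag → |(t' e : ℤ) - (t e : ℤ)| ≤ (p : ℤ))
    (w : Fin n) (hS : Swap.SetHasType p m ℓ (Swap.labelSet n t w)) :
    |Swap.labelSum n t' w - Swap.labelSum n t w| ≤ (m : ℤ) * (p : ℤ) ^ 2 + (p : ℤ) * ((n : ℤ) - 1 - ℓ) := by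
  classical
  set N := Swap.eps n with hN
  set En : Finset (Sym2 (Fin n)) := Finset.univ.filter (fun e => ¬ e.IsDiag) with hEn
  have hEnc : (En : Set (Sym2 (Fin n))) = {e | ¬ e.IsDiag} := by ext e; simp [hEn]
  have htinj : Set.InjOn t ↑En := by rw [hEnc]; exact ht.injOn
  have ht'inj : Set.InjOn t' ↑En := by rw [hEnc]; exact ht'.injOn
  have htimg : En.image t = Finset.Icc 1 N := by
    apply Finset.coe_injective
    rw [Finset.coe_image, hEnc, ht.image_eq, Finset.coe_Icc]
  have ht'img : En.image t' = Finset.Icc 1 N := by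
    apply Finset.coe_injective
    rw [Finset.coe_image, hEnc, ht'.image_eq, Finset.coe_Icc]
  have hdE : ∀ e ∈ En, |(t' e : ℤ) - (t e : ℤ)| ≤ (p : ℤ) := by
    intro e he; exact hdisp e (by simpa [hEn] using he)
  set D := Swap.incEdges n w with hD
  have hmemD : ∀ e : Sym2 (Fin n), e ∈ D ↔ w ∈ e ∧ ¬ e.IsDiag := by
    intro e; simp [hD, Swap.incEdges]
  have hDE : D ⊆ En := by
    intro e he
    rw [hmemD] at he
    simp [hEn, he.2]
  have htD : Set.InjOn t ↑D := htinj.mono (Finset.coe_subset.mpr hDE)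
  have hDcard : D.card ≤ n - 1 := by
    have hsub : D ⊆ (Finset.univ.erase w).image (fun x => s(w, x)) := by
      intro e he
      rw [hmemD] at he
      obtain ⟨hw, hnd⟩ := he
      obtain ⟨x, rfl⟩ := Sym2.mem_iff_exists.mp hw
      have hxw : x ≠ w := by
        intro h
        exact hnd (Sym2.mk_isDiag_iff.mpr h.symm)
      exact Finset.mem_image_of_mem _ (Finset.mem_erase.mpr ⟨hxw, Finset.mem_univ x⟩)
    calc D.card ≤ ((Finset.univ.erase w).image (fun x => s(w, x))).card := Finset.card_le_card hsub
      _ ≤ (Finset.univ.erase w).card := Finset.card_image_le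
      _ = n - 1 := by
          rw [Finset.card_erase_of_mem (Finset.mem_univ w), Finset.card_univ]
          simp
  have hlabelSet : Swap.labelSet n t w = D.image t := rfl
  have hSsub : Swap.labelSet n t w ⊆ Finset.Icc 1 N := by
    rw [hlabelSet, ← htimg]
    exact Finset.image_subset_image hDE
  obtain ⟨𝒜, hAm, hAI, hAdisj, hAl⟩ := hS
  have hIbound : ∀ I ∈ 𝒜, |∑ e ∈ D.filter (fun e => t e ∈ I), ((t' e : ℤ) - (t e : ℤ))| ≤ (p : ℤ) ^ 2 := by
    intro I hI
    obtain ⟨⟨a, b, hab, rfl⟩, hIsub, -⟩ := hAI I hI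
    have hrange : 1 ≤ a ∧ b ≤ N := by
      have haI : a ∈ Finset.Icc a b := Finset.mem_Icc.mpr ⟨le_refl a, hab⟩
      have hbI : b ∈ Finset.Icc a b := Finset.mem_Icc.mpr ⟨hab, le_refl b⟩
      have h1 := hSsub (hIsub haI)
      have h2 := hSsub (hIsub hbI)
      rw [Finset.mem_Icc] at h1 h2
      omega
    have hfeq : D.filter (fun e => t e ∈ Finset.Icc a b) = En.filter (fun e => t e ∈ Finset.Icc a b) := by
      apply Finset.Subset.antisymm
      · exact Finset.filter_subset_filter _ hDE
      · intro e he
        rw [Finset.mem_filter] at he ⊢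
        refine ⟨?_, he.2⟩
        have hmem : t e ∈ Swap.labelSet n t w := hIsub he.2
        rw [hlabelSet] at hmem
        obtain ⟨e', he', hte'⟩ := Finset.mem_image.mp hmem
        have heq : e' = e := htinj (Finset.mem_coe.mpr (hDE he')) (Finset.mem_coe.mpr he.1) hte'
        exact heq ▸ he'
    have h1tEn : ∀ e ∈ En, 1 ≤ t e := by
      intro e he
      have : t e ∈ En.image t := Finset.mem_image_of_mem t he
      rw [htimg, Finset.mem_Icc] at this
      exact this.1
    have hsplit : En.filter (fun e => t e ≤ b) =
        En.filter (fun e => t e ∈ Finset.Icc a b) ∪ En.filter (fun e => t e ≤ a - 1) := by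
      ext e
      simp only [Finset.mem_union, Finset.mem_filter, Finset.mem_Icc]
      constructor
      · rintro ⟨he, hb⟩
        by_cases hc : a ≤ t e
        · exact Or.inl ⟨he, hc, hb⟩
        · exact Or.inr ⟨he, by omega⟩
      · rintro (⟨he, h1, h2⟩ | ⟨he, h1⟩)
        · exact ⟨he, h2⟩
        · exact ⟨he, by omega⟩
    have hdisj2 : Disjoint (En.filter (fun e => t e ∈ Finset.Icc a b)) (En.filter (fun e => t e ≤ a - 1)) := by
      rw [Finset.disjoint_left]
      intro e h1 h2
      rw [Finset.mem_filter, Finset.mem_Icc] at h1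
      rw [Finset.mem_filter] at h2
      have := hrange.1
      omega
    have hkey1 := aux_key N p t t' En htinj htimg ht'inj ht'img hdE b hrange.2
    have hkey2 := aux_key N p t t' En htinj htimg ht'inj ht'img hdE (a - 1) (by omega)
    have heq2 : ∑ e ∈ En.filter (fun e => t e ≤ b), ((t' e : ℤ) - (t e : ℤ))
        = ∑ e ∈ En.filter (fun e => t e ∈ Finset.Icc a b), ((t' e : ℤ) - (t e : ℤ))
          + ∑ e ∈ En.filter (fun e => t e ≤ a - 1), ((t' e : ℤ) - (t e : ℤ)) := by
      rw [hsplit, Finset.sum_union hdisj2]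
    rw [hfeq, abs_le]
    constructor
    · linarith [hkey1.1, hkey2.2]
    · linarith [hkey1.2, hkey2.1]
  set U := 𝒜.biUnion id with hU
  have hfilterU : D.filter (fun e => t e ∈ U) = 𝒜.biUnion (fun I => D.filter (fun e => t e ∈ I)) := by
    ext e
    simp only [Finset.mem_filter, Finset.mem_biUnion, hU, id]
    tauto
  have hdisjF : (↑𝒜 : Set (Finset ℕ)).PairwiseDisjoint (fun I => D.filter (fun e => t e ∈ I)) := by
    intro I hI J hJ hIJ
    have hd3 := hAdisj hI hJ hIJ
    simp only [Function.onFun, id] at hd3 ⊢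
    rw [Finset.disjoint_left] at hd3 ⊢
    intro e he1 he2
    rw [Finset.mem_filter] at he1 he2
    exact hd3 he1.2 he2.2
  have hsum_split : ∑ e ∈ D, ((t' e : ℤ) - (t e : ℤ))
      = (∑ I ∈ 𝒜, ∑ e ∈ D.filter (fun e => t e ∈ I), ((t' e : ℤ) - (t e : ℤ)))
        + ∑ e ∈ D.filter (fun e => ¬ t e ∈ U), ((t' e : ℤ) - (t e : ℤ)) := by
    rw [← Finset.sum_biUnion hdisjF, ← hfilterU, Finset.sum_filter_add_sum_filter_not]
  have hb1 : |∑ I ∈ 𝒜, ∑ e ∈ D.filter (fun e => t e ∈ I), ((t' e : ℤ) - (t e : ℤ))|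
      ≤ (m : ℤ) * (p : ℤ) ^ 2 := by
    calc |∑ I ∈ 𝒜, ∑ e ∈ D.filter (fun e => t e ∈ I), ((t' e : ℤ) - (t e : ℤ))|
        ≤ ∑ I ∈ 𝒜, |∑ e ∈ D.filter (fun e => t e ∈ I), ((t' e : ℤ) - (t e : ℤ))| :=
          Finset.abs_sum_le_sum_abs _ _
      _ ≤ ∑ I ∈ 𝒜, (p : ℤ) ^ 2 := Finset.sum_le_sum hIbound
      _ = (𝒜.card : ℤ) * (p : ℤ) ^ 2 := by rw [Finset.sum_const, nsmul_eq_mul]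
      _ ≤ (m : ℤ) * (p : ℤ) ^ 2 := by
          have h1 : (𝒜.card : ℤ) ≤ m := by exact_mod_cast hAm
          have h2 : (0 : ℤ) ≤ (p : ℤ) ^ 2 := by positivity
          nlinarith
  have himgU : (D.filter (fun e => t e ∈ U)).image t = U := by
    apply Finset.Subset.antisymm
    · intro y hy
      obtain ⟨e, he, rfl⟩ := Finset.mem_image.mp hy
      exact (Finset.mem_filter.mp he).2
    · intro y hy
      have hyS : y ∈ Swap.labelSet n t w := by
        obtain ⟨I, hI, hyI⟩ := Finset.mem_biUnion.mp hy
        exact (hAI I hI).2.1 hyI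
      rw [hlabelSet] at hyS
      obtain ⟨e, he, rfl⟩ := Finset.mem_image.mp hyS
      exact Finset.mem_image_of_mem t (Finset.mem_filter.mpr ⟨he, hy⟩)
  have hcardIn : (D.filter (fun e => t e ∈ U)).card = U.card := by
    conv_rhs => rw [← himgU]
    exact (Finset.card_image_of_injOn (htD.mono (Finset.coe_subset.mpr (Finset.filter_subset (fun e => t e ∈ U) D)))).symm
  have hUcard : ℓ ≤ U.card := by
    rw [hU, Finset.card_biUnion (fun I hI J hJ h => hAdisj hI hJ h)]
    simpa using hAl
  have hcardsum : (D.filter (fun e => t e ∈ U)).card + (D.filter (fun e => ¬ t e ∈ U)).card = D.card :=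
    Finset.card_filter_add_card_filter_not (p := fun e => t e ∈ U)
  have hb2 : |∑ e ∈ D.filter (fun e => ¬ t e ∈ U), ((t' e : ℤ) - (t e : ℤ))|
      ≤ (p : ℤ) * ((n : ℤ) - 1 - ℓ) := by
    calc |∑ e ∈ D.filter (fun e => ¬ t e ∈ U), ((t' e : ℤ) - (t e : ℤ))|
        ≤ ∑ e ∈ D.filter (fun e => ¬ t e ∈ U), |(t' e : ℤ) - (t e : ℤ)| :=
          Finset.abs_sum_le_sum_abs _ _
      _ ≤ ∑ e ∈ D.filter (fun e => ¬ t e ∈ U), (p : ℤ) :=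
          Finset.sum_le_sum (fun e he => hdE e (hDE (Finset.filter_subset _ _ he)))
      _ = ((D.filter (fun e => ¬ t e ∈ U)).card : ℤ) * p := by
          rw [Finset.sum_const, nsmul_eq_mul]
      _ ≤ ((n : ℤ) - 1 - ℓ) * p := by
          have hcle : ((D.filter (fun e => ¬ t e ∈ U)).card : ℤ) ≤ (n : ℤ) - 1 - ℓ := by
            omega
          have h2 : (0 : ℤ) ≤ p := by positivity
          nlinarith
      _ = (p : ℤ) * ((n : ℤ) - 1 - ℓ) := mul_comm _ _
  have hsum : Swap.labelSum n t' w - Swap.labelSum n t w = ∑ e ∈ D, ((t' e : ℤ) - (t e : ℤ)) := by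
    rw [Swap.labelSum, Swap.labelSum, ← Finset.sum_sub_distrib]
  rw [hsum, hsum_split]
  calc |(∑ I ∈ 𝒜, ∑ e ∈ D.filter (fun e => t e ∈ I), ((t' e : ℤ) - (t e : ℤ)))
        + ∑ e ∈ D.filter (fun e => ¬ t e ∈ U), ((t' e : ℤ) - (t e : ℤ))|
      ≤ |∑ I ∈ 𝒜, ∑ e ∈ D.filter (fun e => t e ∈ I), ((t' e : ℤ) - (t e : ℤ))|
        + |∑ e ∈ D.filter (fun e => ¬ t e ∈ U), ((t' e : ℤ) - (t e : ℤ))| := abs_add_le _ _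
    _ ≤ (m : ℤ) * (p : ℤ) ^ 2 + (p : ℤ) * ((n : ℤ) - 1 - ℓ) := add_le_add hb1 hb2

end VB

theorem stmt9 (n p m ℓ : ℕ) (hn : 2 ≤ n) (hp : 0 < p) (hm : 0 < m) (hℓ : 0 < ℓ)
    (t : Sym2 (Fin n) → ℕ) (ht : Swap.IsEdgeLabeling n t)
    (htype : Swap.LabelingHasType n p m ℓ t)
    (u v : Fin n) (huv : u ≠ v)
    (t' : Sym2 (Fin n) → ℕ) (hsw : Swap.IsPSwap n p t t') :
    |Swap.labelSum n t' u - Swap.labelSum n t' v|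
      ≤ |Swap.labelSum n t u - Swap.labelSum n t v|
        + 2 * m * (p : ℤ) ^ 2 + 2 * p * ((n : ℤ) - ℓ - 1) := by
  have h1 := vertex_bound n p m ℓ hn t t' ht hsw.1 hsw.2 u (htype u)
  have h2 := vertex_bound n p m ℓ hn t t' ht hsw.1 hsw.2 v (htype v)
  have habs1 : |Swap.labelSum n t' u - Swap.labelSum n t' v|
      ≤ |Swap.labelSum n t u - Swap.labelSum n t v|
        + (|Swap.labelSum n t' u - Swap.labelSum n t u|
          + |Swap.labelSum n t' v - Swap.labelSum n t v|) := by
    have e1 : Swap.labelSum n t' u - Swap.labelSum n t' v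
        = (Swap.labelSum n t u - Swap.labelSum n t v)
          + ((Swap.labelSum n t' u - Swap.labelSum n t u)
            - (Swap.labelSum n t' v - Swap.labelSum n t v)) := by ring
    rw [e1]
    calc |(Swap.labelSum n t u - Swap.labelSum n t v)
          + ((Swap.labelSum n t' u - Swap.labelSum n t u)
            - (Swap.labelSum n t' v - Swap.labelSum n t v))|
        ≤ |Swap.labelSum n t u - Swap.labelSum n t v|
          + |(Swap.labelSum n t' u - Swap.labelSum n t u)
            - (Swap.labelSum n t' v - Swap.labelSum n t v)| := abs_add_le _ _
      _ ≤ _ := by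
          gcongr
          calc |(Swap.labelSum n t' u - Swap.labelSum n t u)
                - (Swap.labelSum n t' v - Swap.labelSum n t v)|
              = |(Swap.labelSum n t' u - Swap.labelSum n t u)
                + -(Swap.labelSum n t' v - Swap.labelSum n t v)| := by rw [sub_eq_add_neg]
            _ ≤ |Swap.labelSum n t' u - Swap.labelSum n t u|
                + |-(Swap.labelSum n t' v - Swap.labelSum n t v)| := abs_add_le _ _
            _ = |Swap.labelSum n t' u - Swap.labelSum n t u|
                + |Swap.labelSum n t' v - Swap.labelSum n t v| := by rw [abs_neg]
  have hfinal : |Swap.labelSum n t u - Swap.labelSum n t v|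
        + ((m : ℤ) * (p : ℤ) ^ 2 + (p : ℤ) * ((n : ℤ) - 1 - ℓ)
          + ((m : ℤ) * (p : ℤ) ^ 2 + (p : ℤ) * ((n : ℤ) - 1 - ℓ)))
      = |Swap.labelSum n t u - Swap.labelSum n t v|
        + 2 * m * (p : ℤ) ^ 2 + 2 * p * ((n : ℤ) - ℓ - 1) := by ring
  linarith
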